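/- Let d ≥ 1 and let G = (N, E) be a spatial network all of whose nodes lie in the unit cube [0,1]^d. Let φ_1, …, φ_{2^d} be the multilinear Lagrange basis functions of [0,1]^d, let α = (α_1, …, α_{2^d}) ∈ ℝ^{2^d}, and let v : N → ℝ be the restriction to N of Σ_i α_i φ_i. Then (a) |v|_L² ≤ 2^d d |α|² |1|_M², where |α| is the Euclidean norm of α and |1|_M² = Σ_{x∈N} (1/2) Σ_{y∼x} |x − y| is the total mass; and (b) |v|_M² = αᵀ Ξ α ≥ λ_min(Ξ) |α|², where Ξ_{ij} := Σ_{x∈N} (1/2) Σ_{y∼x} |x − y| φ_i(x) φ_j(x). Consequently, if λ_min(Ξ) > 0 then |v|_L² ≤ (2^d d |1|_M² / λ_min(Ξ)) |v|_M². -/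

import Mathlib

/-- The multilinear Lagrange basis function of the unit cube `[0,1]^d` associated with
the corner `b : Fin d → Bool`: `φ_b(z) = ∏_j ℓ_j(z_j)` with `ℓ_j(s) = s` or `1 − s`. -/
noncomputable def lagrangeBasis (d : ℕ) (b : Fin d → Bool)
    (z : EuclideanSpace ℝ (Fin d)) : ℝ :=
  ∏ j, if b j then z j else 1 - z j

/-- The mass form `|v|_M² = Σ_{x∈N} (1/2) Σ_{y∼x} |x − y| v(x)²` of a spatial network. -/
noncomputable def massForm {d : ℕ} {ι : Type*} [Fintype ι]
    (p : ι → EuclideanSpace ℝ (Fin d)) (G : SimpleGraph ι) [DecidableRel G.Adj]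
    (v : ι → ℝ) : ℝ :=
  ∑ i, (1 / 2 : ℝ) * ∑ j ∈ Finset.univ.filter (fun j => G.Adj i j),
    dist (p i) (p j) * v i ^ 2

/-- The graph-Laplacian form `|v|_L² = Σ_{x∈N} (1/2) Σ_{y∼x} (v(x) − v(y))² / |x − y|`. -/
noncomputable def lapForm {d : ℕ} {ι : Type*} [Fintype ι]
    (p : ι → EuclideanSpace ℝ (Fin d)) (G : SimpleGraph ι) [DecidableRel G.Adj]
    (v : ι → ℝ) : ℝ :=
  ∑ i, (1 / 2 : ℝ) * ∑ j ∈ Finset.univ.filter (fun j => G.Adj i j),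
    (v i - v j) ^ 2 / dist (p i) (p j)

/-- The Gram-type matrix `Ξ_{bc} = Σ_{x∈N} (1/2) Σ_{y∼x} |x − y| φ_b(x) φ_c(x)`. -/
noncomputable def XiMatrix {d : ℕ} {ι : Type*} [Fintype ι]
    (p : ι → EuclideanSpace ℝ (Fin d)) (G : SimpleGraph ι) [DecidableRel G.Adj] :
    Matrix (Fin d → Bool) (Fin d → Bool) ℝ :=
  fun b c => ∑ i, (1 / 2 : ℝ) * ∑ j ∈ Finset.univ.filter (fun j => G.Adj i j),
    dist (p i) (p j) * (lagrangeBasis d b (p i) * lagrangeBasis d c (p i))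

/-- The smallest eigenvalue of a symmetric matrix, characterized as the infimum of the
Rayleigh quotient over the unit sphere. -/
noncomputable def lambdaMin {n : Type*} [Fintype n] (A : Matrix n n ℝ) : ℝ :=
  sInf {r : ℝ | ∃ β : n → ℝ, (∑ i, β i ^ 2) = 1 ∧ r = ∑ i, ∑ j, β i * A i j * β j}

section Aux
open Finset

lemma quad_expand {κ : Type*} [Fintype κ] (K : ℝ) (u : κ → ℝ) :
    K * (∑ b, u b) ^ 2 = ∑ b, ∑ c, u b * K * u c := by
  rw [sq, Finset.sum_mul_sum, Finset.mul_sum]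
  exact Finset.sum_congr rfl fun b _ => by
    rw [Finset.mul_sum]; exact Finset.sum_congr rfl fun c _ => by ring

end Aux

open Finset

lemma abs_prod_sub_prod {ι : Type*} (s : Finset ι) (a b : ι → ℝ)
    (ha : ∀ j ∈ s, a j ∈ Set.Icc (0:ℝ) 1) (hb : ∀ j ∈ s, b j ∈ Set.Icc (0:ℝ) 1) :
    |∏ j ∈ s, a j - ∏ j ∈ s, b j| ≤ ∑ j ∈ s, |a j - b j| := by
  classical
  induction s using Finset.induction_on with
  | empty => simp
  | insert i s hi ih =>
    have ha' : ∀ j ∈ s, a j ∈ Set.Icc (0:ℝ) 1 := fun j hj => ha j (Finset.mem_insert_of_mem hj)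
    have hb' : ∀ j ∈ s, b j ∈ Set.Icc (0:ℝ) 1 := fun j hj => hb j (Finset.mem_insert_of_mem hj)
    have hai := ha i (Finset.mem_insert_self i s)
    have hQ0 : (0:ℝ) ≤ ∏ j ∈ s, b j := Finset.prod_nonneg fun j hj => (hb' j hj).1
    have hQ1 : ∏ j ∈ s, b j ≤ 1 := Finset.prod_le_one (fun j hj => (hb' j hj).1) (fun j hj => (hb' j hj).2)
    rw [Finset.prod_insert hi, Finset.prod_insert hi, Finset.sum_insert hi]
    have key : a i * ∏ j ∈ s, a j - b i * ∏ j ∈ s, b j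
        = a i * (∏ j ∈ s, a j - ∏ j ∈ s, b j) + (a i - b i) * ∏ j ∈ s, b j := by ring
    calc |a i * ∏ j ∈ s, a j - b i * ∏ j ∈ s, b j|
        ≤ |a i| * |∏ j ∈ s, a j - ∏ j ∈ s, b j| + |a i - b i| * |∏ j ∈ s, b j| := by
          rw [key]; exact (abs_add_le _ _).trans (by rw [abs_mul, abs_mul])
      _ ≤ 1 * (∑ j ∈ s, |a j - b j|) + |a i - b i| * 1 := by
          have h1 : |a i| ≤ 1 := abs_le.2 ⟨by linarith [hai.1], hai.2⟩
          have h2 : |∏ j ∈ s, b j| ≤ 1 := abs_le.2 ⟨by linarith, hQ1⟩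
          exact add_le_add (mul_le_mul h1 (ih ha' hb') (abs_nonneg _) one_pos.le)
            (mul_le_mul_of_nonneg_left h2 (abs_nonneg _))
      _ = |a i - b i| + ∑ j ∈ s, |a j - b j| := by ring

lemma lagrange_lip {d : ℕ} (b : Fin d → Bool) (x y : EuclideanSpace ℝ (Fin d))
    (hx : ∀ k, x k ∈ Set.Icc (0:ℝ) 1) (hy : ∀ k, y k ∈ Set.Icc (0:ℝ) 1) :
    |lagrangeBasis d b x - lagrangeBasis d b y| ≤ ∑ j, |x j - y j| := by
  unfold lagrangeBasis
  have := abs_prod_sub_prod Finset.univ (fun j => if b j then x j else 1 - x j)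
    (fun j => if b j then y j else 1 - y j)
    (fun j _ => by by_cases h : b j <;> simp [h] <;> constructor <;>
      first | linarith [(hx j).1, (hx j).2] | linarith)
    (fun j _ => by by_cases h : b j <;> simp [h] <;> constructor <;>
      first | linarith [(hy j).1, (hy j).2] | linarith)
  refine this.trans (le_of_eq (Finset.sum_congr rfl fun j _ => ?_))
  by_cases h : b j
  · simp [h]
  · simp only [h, if_false, Bool.false_eq_true]
    rw [show (1:ℝ) - x j - (1 - y j) = -(x j - y j) from by ring, abs_neg]

lemma lagrange_mem {d : ℕ} (b : Fin d → Bool) (x : EuclideanSpace ℝ (Fin d))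
    (hx : ∀ k, x k ∈ Set.Icc (0:ℝ) 1) : lagrangeBasis d b x ∈ Set.Icc (0:ℝ) 1 := by
  unfold lagrangeBasis
  constructor
  · exact Finset.prod_nonneg fun j _ => by by_cases h : b j <;> simp [h] <;>
      first | exact (hx j).1 | linarith [(hx j).2]
  · exact Finset.prod_le_one (fun j _ => by by_cases h : b j <;> simp [h] <;>
      first | exact (hx j).1 | linarith [(hx j).2])
      (fun j _ => by by_cases h : b j <;> simp [h] <;>
      first | exact (hx j).2 | linarith [(hx j).1])

lemma key_bound {d : ℕ} (α : (Fin d → Bool) → ℝ) (x y : EuclideanSpace ℝ (Fin d))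
    (hx : ∀ k, x k ∈ Set.Icc (0:ℝ) 1) (hy : ∀ k, y k ∈ Set.Icc (0:ℝ) 1) :
    ((∑ b, α b * lagrangeBasis d b x) - ∑ b, α b * lagrangeBasis d b y) ^ 2
      ≤ 2 ^ d * d * (∑ b, α b ^ 2) * dist x y ^ 2 := by
  set Δ : ℝ := ∑ j, |x j - y j| with hΔ
  have h1 : |(∑ b, α b * lagrangeBasis d b x) - ∑ b, α b * lagrangeBasis d b y|
      ≤ (∑ b, |α b|) * Δ := by
    rw [← Finset.sum_sub_distrib]
    refine (Finset.abs_sum_le_sum_abs _ _).trans ?_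
    rw [Finset.sum_mul]
    refine Finset.sum_le_sum fun b _ => ?_
    rw [show α b * lagrangeBasis d b x - α b * lagrangeBasis d b y
        = α b * (lagrangeBasis d b x - lagrangeBasis d b y) by ring, abs_mul]
    exact mul_le_mul_of_nonneg_left (lagrange_lip b x y hx hy) (abs_nonneg _)
  have h2 : ((∑ b, α b * lagrangeBasis d b x) - ∑ b, α b * lagrangeBasis d b y) ^ 2
      ≤ ((∑ b, |α b|) * Δ) ^ 2 := by
    rw [← sq_abs]
    exact pow_le_pow_left₀ (abs_nonneg _) h1 2
  refine h2.trans ?_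
  rw [mul_pow]
  have hA : (∑ b, |α b|) ^ 2 ≤ 2 ^ d * ∑ b, α b ^ 2 := by
    have := sq_sum_le_card_mul_sum_sq (s := (Finset.univ : Finset (Fin d → Bool)))
      (f := fun b => |α b|)
    simpa [sq_abs, Finset.card_univ] using this
  have hB : Δ ^ 2 ≤ d * dist x y ^ 2 := by
    have := sq_sum_le_card_mul_sum_sq (s := (Finset.univ : Finset (Fin d)))
      (f := fun j => |x j - y j|)
    have hdist : dist x y ^ 2 = ∑ j, (x j - y j) ^ 2 := by
      rw [EuclideanSpace.dist_eq, Real.sq_sqrt (Finset.sum_nonneg fun j _ => sq_nonneg _)]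
      simp [Real.dist_eq, sq_abs]
    rw [hdist]
    simpa [sq_abs, Finset.card_univ] using this
  calc (∑ b, |α b|) ^ 2 * Δ ^ 2 ≤ (2 ^ d * ∑ b, α b ^ 2) * (d * dist x y ^ 2) := by
        apply mul_le_mul hA hB (sq_nonneg _)
        positivity
    _ = 2 ^ d * d * (∑ b, α b ^ 2) * dist x y ^ 2 := by ring



/-- the unit-cell inequalities at the heart of the inverse inequality
(Lemma 5.2): for a network in `[0,1]^d` and `v` the restriction of `Σ_b α_b φ_b`,
(a) `|v|_L² ≤ 2^d d |α|² |1|_M²`, (b) `|v|_M² = αᵀ Ξ α ≥ λ_min(Ξ) |α|²`, and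
consequently `|v|_L² ≤ (2^d d |1|_M² / λ_min(Ξ)) |v|_M²` when `λ_min(Ξ) > 0`. -/
theorem stmt8 {d : ℕ} (hd : 1 ≤ d) {ι : Type*} [Fintype ι]
    (p : ι → EuclideanSpace ℝ (Fin d)) (G : SimpleGraph ι) [DecidableRel G.Adj]
    (hp : ∀ i j, G.Adj i j → p i ≠ p j)
    (hcube : ∀ i, ∀ k : Fin d, p i k ∈ Set.Icc (0 : ℝ) 1)
    (α : (Fin d → Bool) → ℝ) (v : ι → ℝ)
    (hv : ∀ i, v i = ∑ b : Fin d → Bool, α b * lagrangeBasis d b (p i)) :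
    lapForm p G v ≤ 2 ^ d * d * (∑ b : Fin d → Bool, α b ^ 2) * massForm p G (fun _ => 1) ∧
    massForm p G v = ∑ b : Fin d → Bool, ∑ c : Fin d → Bool, α b * XiMatrix p G b c * α c ∧
    lambdaMin (XiMatrix p G) * (∑ b : Fin d → Bool, α b ^ 2) ≤ massForm p G v ∧
    (0 < lambdaMin (XiMatrix p G) →
      lapForm p G v ≤
        (2 ^ d * d * massForm p G (fun _ => 1) / lambdaMin (XiMatrix p G)) *
          massForm p G v) := by
  classical
  have hmass1 : 0 ≤ massForm p G (fun _ => 1) := by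
    unfold massForm
    refine Finset.sum_nonneg fun i _ => mul_nonneg (by norm_num) ?_
    exact Finset.sum_nonneg fun j _ => by positivity
  -- Part (a)
  have ha : lapForm p G v
      ≤ 2 ^ d * d * (∑ b : Fin d → Bool, α b ^ 2) * massForm p G (fun _ => 1) := by
    have hrhs : 2 ^ d * d * (∑ b : Fin d → Bool, α b ^ 2) * massForm p G (fun _ => 1)
        = ∑ i, (1/2 : ℝ) * ∑ j ∈ Finset.univ.filter (fun j => G.Adj i j),
            2 ^ d * d * (∑ b : Fin d → Bool, α b ^ 2) * dist (p i) (p j) := by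
      unfold massForm
      rw [Finset.mul_sum]
      refine Finset.sum_congr rfl fun i _ => ?_
      rw [mul_left_comm]
      congr 1
      rw [Finset.mul_sum]
      exact Finset.sum_congr rfl fun j _ => by ring
    rw [hrhs]
    unfold lapForm
    refine Finset.sum_le_sum fun i _ => mul_le_mul_of_nonneg_left ?_ (by norm_num)
    refine Finset.sum_le_sum fun j hj => ?_
    have hadj : G.Adj i j := by simpa using (Finset.mem_filter.mp hj).2
    have hd0 : 0 < dist (p i) (p j) := dist_pos.mpr (hp i j hadj)
    rw [div_le_iff₀ hd0]
    have h2 : 2 ^ d * ↑d * (∑ b : Fin d → Bool, α b ^ 2) * dist (p i) (p j) * dist (p i) (p j)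
        = 2 ^ d * ↑d * (∑ b : Fin d → Bool, α b ^ 2) * dist (p i) (p j) ^ 2 := by ring
    rw [h2, hv i, hv j]
    exact key_bound α (p i) (p j) (hcube i) (hcube j)
  -- Part (b)
  have hXi : ∀ b c, XiMatrix p G b c
      = ∑ i, (1/2 : ℝ) * ((∑ j ∈ Finset.univ.filter (fun j => G.Adj i j), dist (p i) (p j))
          * (lagrangeBasis d b (p i) * lagrangeBasis d c (p i))) := by
    intro b c
    unfold XiMatrix
    refine Finset.sum_congr rfl fun i _ => ?_
    rw [Finset.sum_mul]
  have hM : massForm p G v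
      = ∑ i, (1/2 : ℝ) * ((∑ j ∈ Finset.univ.filter (fun j => G.Adj i j), dist (p i) (p j))
          * v i ^ 2) := by
    unfold massForm
    refine Finset.sum_congr rfl fun i _ => ?_
    rw [Finset.sum_mul]
  have hb : massForm p G v
      = ∑ b : Fin d → Bool, ∑ c : Fin d → Bool, α b * XiMatrix p G b c * α c := by
    have step : ∀ b c, α b * XiMatrix p G b c * α c
        = ∑ i, α b * ((1/2 : ℝ) * ((∑ j ∈ Finset.univ.filter (fun j => G.Adj i j),
            dist (p i) (p j)) * (lagrangeBasis d b (p i) * lagrangeBasis d c (p i)))) * α c := by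
      intro b c
      rw [hXi b c, Finset.mul_sum, Finset.sum_mul]
    calc massForm p G v
        = ∑ i, (1/2 : ℝ) * ((∑ j ∈ Finset.univ.filter (fun j => G.Adj i j), dist (p i) (p j))
            * v i ^ 2) := hM
      _ = ∑ i, ∑ b : Fin d → Bool, ∑ c : Fin d → Bool,
            α b * ((1/2 : ℝ) * ((∑ j ∈ Finset.univ.filter (fun j => G.Adj i j),
              dist (p i) (p j)) * (lagrangeBasis d b (p i) * lagrangeBasis d c (p i)))) * α c := by
          refine Finset.sum_congr rfl fun i _ => ?_
          rw [hv i,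
            show (1/2 : ℝ) * ((∑ j ∈ Finset.univ.filter (fun j => G.Adj i j), dist (p i) (p j))
              * (∑ b : Fin d → Bool, α b * lagrangeBasis d b (p i)) ^ 2)
            = ((1/2 : ℝ) * ∑ j ∈ Finset.univ.filter (fun j => G.Adj i j), dist (p i) (p j))
              * (∑ b : Fin d → Bool, α b * lagrangeBasis d b (p i)) ^ 2 from by ring,
            quad_expand]
          exact Finset.sum_congr rfl fun b _ => Finset.sum_congr rfl fun c _ => by ring
      _ = ∑ b : Fin d → Bool, ∑ i, ∑ c : Fin d → Bool,
            α b * ((1/2 : ℝ) * ((∑ j ∈ Finset.univ.filter (fun j => G.Adj i j),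
              dist (p i) (p j)) * (lagrangeBasis d b (p i) * lagrangeBasis d c (p i)))) * α c :=
          Finset.sum_comm
      _ = ∑ b : Fin d → Bool, ∑ c : Fin d → Bool, ∑ i,
            α b * ((1/2 : ℝ) * ((∑ j ∈ Finset.univ.filter (fun j => G.Adj i j),
              dist (p i) (p j)) * (lagrangeBasis d b (p i) * lagrangeBasis d c (p i)))) * α c :=
          Finset.sum_congr rfl fun b _ => Finset.sum_comm
      _ = ∑ b : Fin d → Bool, ∑ c : Fin d → Bool, α b * XiMatrix p G b c * α c :=
          Finset.sum_congr rfl fun b _ => Finset.sum_congr rfl fun c _ => (step b c).symm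
  -- lambdaMin part
  have hs0 : (0:ℝ) ≤ ∑ b : Fin d → Bool, α b ^ 2 := Finset.sum_nonneg fun b _ => sq_nonneg _
  have hlam : lambdaMin (XiMatrix p G) * (∑ b : Fin d → Bool, α b ^ 2) ≤ massForm p G v := by
    set A := XiMatrix p G with hA
    have hbdd : BddBelow {r : ℝ | ∃ β : (Fin d → Bool) → ℝ,
        (∑ i, β i ^ 2) = 1 ∧ r = ∑ i, ∑ j, β i * A i j * β j} := by
      refine ⟨-(∑ b : Fin d → Bool, ∑ c : Fin d → Bool, |A b c|), fun r hr => ?_⟩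
      obtain ⟨β, hβ, rfl⟩ := hr
      have hβ1 : ∀ i, |β i| ≤ 1 := by
        intro i
        rw [← sq_le_one_iff_abs_le_one]
        calc β i ^ 2 ≤ ∑ j, β j ^ 2 :=
              Finset.single_le_sum (f := fun j => β j ^ 2) (fun j _ => sq_nonneg _) (Finset.mem_univ i)
          _ = 1 := hβ
      have habs : |∑ i, ∑ j, β i * A i j * β j|
          ≤ ∑ b : Fin d → Bool, ∑ c : Fin d → Bool, |A b c| := by
        refine (Finset.abs_sum_le_sum_abs _ _).trans (Finset.sum_le_sum fun b _ => ?_)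
        refine (Finset.abs_sum_le_sum_abs _ _).trans (Finset.sum_le_sum fun c _ => ?_)
        rw [abs_mul, abs_mul]
        calc |β b| * |A b c| * |β c| ≤ 1 * |A b c| * 1 := by
              refine mul_le_mul (mul_le_mul (hβ1 b) le_rfl (abs_nonneg _) zero_le_one)
                (hβ1 c) (abs_nonneg _) ?_
              positivity
          _ = |A b c| := by ring
      linarith [neg_abs_le (∑ i, ∑ j, β i * A i j * β j)]
    rcases eq_or_lt_of_le hs0 with h0 | h0
    · rw [hb]
      have hz : ∀ b, α b = 0 := by
        intro b
        have := (Finset.sum_eq_zero_iff_of_nonneg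
          (fun b _ => sq_nonneg (α b))).mp h0.symm b (Finset.mem_univ b)
        exact pow_eq_zero_iff two_ne_zero |>.mp this
      simp [hz]
    · have hsq : Real.sqrt (∑ b : Fin d → Bool, α b ^ 2) * Real.sqrt (∑ b : Fin d → Bool, α b ^ 2)
          = ∑ b : Fin d → Bool, α b ^ 2 := Real.mul_self_sqrt hs0
      set β : (Fin d → Bool) → ℝ := fun b => α b / Real.sqrt (∑ b : Fin d → Bool, α b ^ 2) with hβdef
      have hβ : ∑ b, β b ^ 2 = 1 := by
        simp only [hβdef, div_pow, Real.sq_sqrt hs0]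
        rw [← Finset.sum_div, div_self (ne_of_gt h0)]
      have hQ : (∑ i, ∑ j, β i * A i j * β j)
          = (∑ i, ∑ j, α i * A i j * α j) / (∑ b : Fin d → Bool, α b ^ 2) := by
        rw [Finset.sum_div]
        refine Finset.sum_congr rfl fun b _ => ?_
        rw [Finset.sum_div]
        refine Finset.sum_congr rfl fun c _ => ?_
        simp only [hβdef]
        rw [show α b / Real.sqrt (∑ b : Fin d → Bool, α b ^ 2) * A b c
            * (α c / Real.sqrt (∑ b : Fin d → Bool, α b ^ 2))
            = α b * A b c * α c
              / (Real.sqrt (∑ b : Fin d → Bool, α b ^ 2)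
                * Real.sqrt (∑ b : Fin d → Bool, α b ^ 2)) from by ring, hsq]
      have hmem : (∑ i, ∑ j, β i * A i j * β j) ∈ {r : ℝ | ∃ β : (Fin d → Bool) → ℝ,
          (∑ i, β i ^ 2) = 1 ∧ r = ∑ i, ∑ j, β i * A i j * β j} := ⟨β, hβ, rfl⟩
      have hle : lambdaMin A ≤ (∑ i, ∑ j, α i * A i j * α j) / (∑ b : Fin d → Bool, α b ^ 2) := by
        rw [← hQ]
        exact csInf_le hbdd hmem
      rw [hb]
      exact (le_div_iff₀ h0).mp hle
  refine ⟨ha, hb, hlam, fun hpos => ?_⟩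
  have key2 : 2 ^ d * d * (∑ b : Fin d → Bool, α b ^ 2) * massForm p G (fun _ => 1)
      = (2 ^ d * d * massForm p G (fun _ => 1) / lambdaMin (XiMatrix p G))
        * (lambdaMin (XiMatrix p G) * (∑ b : Fin d → Bool, α b ^ 2)) := by
    field_simp
  refine ha.trans ?_
  rw [key2]
  refine mul_le_mul_of_nonneg_left hlam ?_
  exact div_nonneg (mul_nonneg (mul_nonneg (by positivity) (Nat.cast_nonneg d)) hmass1) hpos.le
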